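/- The symmetrized bidisc 𝔾₂ := {(z+w, zw) : z, w ∈ 𝔻} coincides with the set {(s,p) ∈ ℂ² : |s - conj(s)·p| + |p|² < 1}. -/

import Mathlib

open Complex

lemma aux_root (s p z : ℂ)
    (h : ‖s - (starRingEnd ℂ) s * p‖ + ‖p‖ ^ 2 < 1)
    (hz : z ^ 2 - s * z + p = 0) : ‖z‖ < 1 := by
  by_contra hc
  push_neg at hc
  set a := ‖z‖ with ha
  set b := ‖p‖ with hb
  have habs : (0:ℝ) ≤ ‖s - (starRingEnd ℂ) s * p‖ := norm_nonneg _
  have hb2 : b ^ 2 < 1 := by linarith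
  have hbnn : (0:ℝ) ≤ b := norm_nonneg p
  have hblt : b < 1 := by nlinarith
  have h1 : s * z = z ^ 2 + p := by linear_combination (-1 : ℂ) * hz
  have h2 : (starRingEnd ℂ) s * (starRingEnd ℂ) z = (starRingEnd ℂ) z ^ 2 + (starRingEnd ℂ) p := by
    have := congrArg (starRingEnd ℂ) h1
    simpa [map_mul, map_add, map_pow] using this
  have key : (s - (starRingEnd ℂ) s * p) * (z * (starRingEnd ℂ) z) =
      (z * (starRingEnd ℂ) z - p * (starRingEnd ℂ) p) * z
        - p * (z * (starRingEnd ℂ) z - 1) * (starRingEnd ℂ) z := by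
    linear_combination ((starRingEnd ℂ) z) * h1 - (p * z) * h2
  have hX : ‖(z * (starRingEnd ℂ) z - p * (starRingEnd ℂ) p) * z‖
      = (a ^ 2 - b ^ 2) * a := by
    rw [norm_mul, Complex.mul_conj, Complex.mul_conj, ← Complex.ofReal_sub,
      Complex.norm_real, Real.norm_eq_abs, ← Complex.sq_norm, ← Complex.sq_norm]
    rw [_root_.abs_of_nonneg (by nlinarith : (0:ℝ) ≤ ‖z‖ ^ 2 - ‖p‖ ^ 2)]
  have hY : ‖p * (z * (starRingEnd ℂ) z - 1) * (starRingEnd ℂ) z‖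
      = b * (a ^ 2 - 1) * a := by
    rw [norm_mul, norm_mul, Complex.mul_conj, Complex.norm_conj]
    rw [show ((Complex.normSq z : ℂ) - 1) = ((Complex.normSq z - 1 : ℝ) : ℂ) by push_cast; ring,
      Complex.norm_real, Real.norm_eq_abs, ← Complex.sq_norm,
      _root_.abs_of_nonneg (by nlinarith : (0:ℝ) ≤ ‖z‖ ^ 2 - 1)]
  have tri : (a ^ 2 - b ^ 2) * a - b * (a ^ 2 - 1) * a
      ≤ ‖(s - (starRingEnd ℂ) s * p) * (z * (starRingEnd ℂ) z)‖ := by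
    rw [key]
    calc (a ^ 2 - b ^ 2) * a - b * (a ^ 2 - 1) * a
        = ‖(z * (starRingEnd ℂ) z - p * (starRingEnd ℂ) p) * z‖
          - ‖p * (z * (starRingEnd ℂ) z - 1) * (starRingEnd ℂ) z‖ := by
          rw [hX, hY]
      _ ≤ _ := norm_sub_norm_le _ _
  have habs2 : ‖(s - (starRingEnd ℂ) s * p) * (z * (starRingEnd ℂ) z)‖
      = ‖s - (starRingEnd ℂ) s * p‖ * a ^ 2 := by
    rw [norm_mul, Complex.mul_conj, Complex.norm_real, Real.norm_eq_abs, ← Complex.sq_norm,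
      _root_.abs_of_nonneg (sq_nonneg _)]
  rw [habs2] at tri
  have ha2 : (0:ℝ) < a ^ 2 := by nlinarith
  have hlt : ‖s - (starRingEnd ℂ) s * p‖ * a ^ 2 < (1 - b ^ 2) * a ^ 2 :=
    mul_lt_mul_of_pos_right (by linarith) ha2
  have hprod : (0:ℝ) ≤ ((a - 1) * (a - b) * (1 - b)) * a := by
    apply mul_nonneg
    · apply mul_nonneg (mul_nonneg (by linarith) (by linarith)) (by linarith)
    · linarith
  nlinarith [hprod, hlt, tri]

theorem stmt2 :
    (fun zw : ℂ × ℂ => (zw.1 + zw.2, zw.1 * zw.2)) ''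
        (Metric.ball (0 : ℂ) 1 ×ˢ Metric.ball (0 : ℂ) 1) =
      {sp : ℂ × ℂ | ‖sp.1 - (starRingEnd ℂ) sp.1 * sp.2‖
        + ‖sp.2‖ ^ 2 < 1} := by
  ext ⟨s, p⟩
  simp only [Set.mem_image, Set.mem_prod, Set.mem_setOf_eq, Prod.exists,
    mem_ball_zero_iff, Prod.mk.injEq]
  constructor
  · rintro ⟨z, w, ⟨hz, hw⟩, hs, hp⟩
    subst hs; subst hp
    have e : (z + w) - (starRingEnd ℂ) (z + w) * (z * w)
        = z * (1 - (starRingEnd ℂ) w * w) + w * (1 - (starRingEnd ℂ) z * z) := by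
      rw [map_add]; ring
    have e1 : ‖1 - (starRingEnd ℂ) w * w‖ = 1 - ‖w‖ ^ 2 := by
      rw [show (1 - (starRingEnd ℂ) w * w) = ((1 - Complex.normSq w : ℝ) : ℂ) by
        rw [Complex.ofReal_sub, Complex.normSq_eq_conj_mul_self]; push_cast; ring,
        Complex.norm_real, Real.norm_eq_abs, ← Complex.sq_norm,
        _root_.abs_of_nonneg (by nlinarith [norm_nonneg w] : (0:ℝ) ≤ 1 - ‖w‖ ^ 2)]
    have e2 : ‖1 - (starRingEnd ℂ) z * z‖ = 1 - ‖z‖ ^ 2 := by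
      rw [show (1 - (starRingEnd ℂ) z * z) = ((1 - Complex.normSq z : ℝ) : ℂ) by
        rw [Complex.ofReal_sub, Complex.normSq_eq_conj_mul_self]; push_cast; ring,
        Complex.norm_real, Real.norm_eq_abs, ← Complex.sq_norm,
        _root_.abs_of_nonneg (by nlinarith [norm_nonneg z] : (0:ℝ) ≤ 1 - ‖z‖ ^ 2)]
    have tri : ‖(z + w) - (starRingEnd ℂ) (z + w) * (z * w)‖
        ≤ ‖z‖ * (1 - ‖w‖ ^ 2) + ‖w‖ * (1 - ‖z‖ ^ 2) := by
      rw [e]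
      calc ‖z * (1 - (starRingEnd ℂ) w * w) + w * (1 - (starRingEnd ℂ) z * z)‖
          ≤ ‖z * (1 - (starRingEnd ℂ) w * w)‖
            + ‖w * (1 - (starRingEnd ℂ) z * z)‖ := norm_add_le _ _
        _ = ‖z‖ * (1 - ‖w‖ ^ 2)
            + ‖w‖ * (1 - ‖z‖ ^ 2) := by rw [norm_mul, norm_mul, e1, e2]
    have hpz : ‖z * w‖ ^ 2 = ‖z‖ ^ 2 * ‖w‖ ^ 2 := by
      rw [norm_mul]; ring
    have haz : (0:ℝ) ≤ ‖z‖ := norm_nonneg z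
    have haw : (0:ℝ) ≤ ‖w‖ := norm_nonneg w
    have hfin : ‖z‖ * (1 - ‖w‖ ^ 2) + ‖w‖ * (1 - ‖z‖ ^ 2)
        + ‖z‖ ^ 2 * ‖w‖ ^ 2 < 1 := by
      nlinarith [mul_pos (mul_pos (by linarith : (0:ℝ) < 1 - ‖z‖)
        (by linarith : (0:ℝ) < 1 - ‖w‖))
        (by nlinarith : (0:ℝ) < 1 - ‖z‖ * ‖w‖)]
    rw [hpz]
    linarith
  · intro h
    obtain ⟨d, hd⟩ := IsAlgClosed.exists_pow_nat_eq (s ^ 2 - 4 * p) (n := 2) (by norm_num)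
    refine ⟨(s + d) / 2, (s - d) / 2, ⟨?_, ?_⟩, by ring, by linear_combination (-1/4 : ℂ) * hd⟩
    · exact aux_root s p _ h (by linear_combination (1/4 : ℂ) * hd)
    · exact aux_root s p _ h (by linear_combination (1/4 : ℂ) * hd)
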